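/- Let p be an odd prime and r, m positive integers. Then the following exact identity of rational numbers holds: Σ_{i+j+k=mp^r, i,j,k∈𝒫_p} 1/(ijk) = (6/(m·p^r)) · Σ_{1 ≤ j < l ≤ mp^r, with j, l, l−j ∈ 𝒫_p} 1/(jl), where the first sum is over triples of positive integers summing to m·p^r with all entries coprime to p. -/

import Mathlib

private lemma aux3 (a b c n : ℚ) (ha : a ≠ 0) (hb : b ≠ 0) (hc : c ≠ 0) (hn : n ≠ 0)
    (h : a + b + c = n) :
    1/(a*b*c) = 1/n * (1/(a*b) + 1/(b*c) + 1/(a*c)) := by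
  subst h
  field_simp
  ring

private lemma aux2 (x y n : ℚ) (hx : x ≠ 0) (hy : y ≠ 0) (hn : n ≠ 0) (h : x + y = n) :
    1/(x*y) = 1/(x*n) + 1/(y*n) := by
  subst h
  field_simp
  ring

theorem harmonic_three_sum_eq_pair_sum (p : ℕ) (hp : p.Prime) (hodd : Odd p)
    (r m : ℕ) (hr : 0 < r) (hm : 0 < m) :
    (∑ v ∈ (Finset.Nat.antidiagonalTuple 3 (m * p ^ r)).filter
        (fun v => ∀ i, 0 < v i ∧ Nat.Coprime (v i) p),
      1 / ((v 0 : ℚ) * (v 1 : ℚ) * (v 2 : ℚ))) =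
    (6 / ((m : ℚ) * (p : ℚ) ^ r)) *
      ∑ q ∈ (Finset.Icc 1 (m * p ^ r) ×ˢ Finset.Icc 1 (m * p ^ r)).filter
          (fun q => q.1 < q.2 ∧ Nat.Coprime q.1 p ∧ Nat.Coprime q.2 p ∧
            Nat.Coprime (q.2 - q.1) p),
        1 / ((q.1 : ℚ) * (q.2 : ℚ)) := by
  classical
  set N := m * p ^ r with hNdef
  have hp1 : 1 < p := hp.one_lt
  have hpN : p ∣ N := Dvd.dvd.mul_left (dvd_pow_self p hr.ne') m
  have hNpos : 0 < N := Nat.mul_pos hm (Nat.pow_pos hp.pos)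
  have hcop : ∀ a : ℕ, Nat.Coprime a p ↔ ¬ p ∣ a := by
    intro a
    rw [Nat.coprime_comm]
    exact hp.coprime_iff_not_dvd
  have hsub : ∀ a : ℕ, a ≤ N → (Nat.Coprime (N - a) p ↔ Nat.Coprime a p) := by
    intro a ha
    rw [hcop, hcop]
    constructor
    · intro h hd
      exact h (Nat.dvd_sub hpN hd)
    · intro h hd
      have h2 := Nat.dvd_sub hpN hd
      rw [Nat.sub_sub_self ha] at h2
      exact h h2
  have hltN : ∀ l : ℕ, l ≤ N → Nat.Coprime l p → l < N := by
    intro l hl hc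
    rcases lt_or_eq_of_le hl with h | h
    · exact h
    · exact absurd (h ▸ hpN) ((hcop l).1 hc)
  set P : Finset (ℕ × ℕ) := (Finset.Icc 1 N ×ˢ Finset.Icc 1 N).filter
      (fun q => q.1 + q.2 < N ∧ Nat.Coprime q.1 p ∧ Nat.Coprime q.2 p ∧
        Nat.Coprime (q.1 + q.2) p) with hPdef
  have memP : ∀ a b : ℕ, (a, b) ∈ P ↔ 0 < a ∧ 0 < b ∧ a + b < N ∧
      Nat.Coprime a p ∧ Nat.Coprime b p ∧ Nat.Coprime (a + b) p := by
    intro a b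
    simp only [hPdef, Finset.mem_filter, Finset.mem_product, Finset.mem_Icc]
    constructor
    · rintro ⟨⟨⟨h1, h2⟩, h3, h4⟩, h5, h6, h7, h8⟩
      exact ⟨h1, h3, h5, h6, h7, h8⟩
    · rintro ⟨h1, h2, h3, h4, h5, h6⟩
      exact ⟨⟨⟨h1, by omega⟩, h2, by omega⟩, h3, h4, h5, h6⟩
  set Q : Finset (ℕ × ℕ) := (Finset.Icc 1 N ×ˢ Finset.Icc 1 N).filter
      (fun q => q.1 < q.2 ∧ Nat.Coprime q.1 p ∧ Nat.Coprime q.2 p ∧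
        Nat.Coprime (q.2 - q.1) p) with hQdef
  have memQ : ∀ a b : ℕ, (a, b) ∈ Q ↔ 0 < a ∧ a < b ∧ b ≤ N ∧
      Nat.Coprime a p ∧ Nat.Coprime b p ∧ Nat.Coprime (b - a) p := by
    intro a b
    simp only [hQdef, Finset.mem_filter, Finset.mem_product, Finset.mem_Icc]
    constructor
    · rintro ⟨⟨⟨h1, h2⟩, h3, h4⟩, h5, h6, h7, h8⟩
      exact ⟨h1, h5, h4, h6, h7, h8⟩
    · rintro ⟨h1, h2, h3, h4, h5, h6⟩
      exact ⟨⟨⟨h1, by omega⟩, by omega, h3⟩, h2, h4, h5, h6⟩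
  -- Step A: tuples → pairs
  have stepA : (∑ v ∈ (Finset.Nat.antidiagonalTuple 3 N).filter
        (fun v => ∀ i, 0 < v i ∧ Nat.Coprime (v i) p),
      1 / ((v 0 : ℚ) * (v 1 : ℚ) * (v 2 : ℚ))) =
      ∑ q ∈ P, 1 / ((q.1 : ℚ) * (q.2 : ℚ) * ((N - q.1 - q.2 : ℕ) : ℚ)) := by
    refine Finset.sum_nbij' (fun v => (v 0, v 1))
      (fun q => ![q.1, q.2, N - q.1 - q.2]) ?_ ?_ ?_ ?_ ?_
    · intro v hv
      simp only [Finset.mem_filter, Finset.Nat.mem_antidiagonalTuple,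
        Fin.sum_univ_three] at hv
      obtain ⟨hsum, hall⟩ := hv
      obtain ⟨h0p, h0c⟩ := hall 0
      obtain ⟨h1p, h1c⟩ := hall 1
      obtain ⟨h2p, h2c⟩ := hall 2
      rw [memP]
      refine ⟨h0p, h1p, by omega, h0c, h1c, ?_⟩
      have he : v 0 + v 1 = N - v 2 := by omega
      rw [he, hsub (v 2) (by omega)]
      exact h2c
    · intro q hq
      rw [show q = (q.1, q.2) from rfl, memP] at hq
      obtain ⟨h1, h2, h3, h4, h5, h6⟩ := hq
      rw [Finset.mem_filter, Finset.Nat.mem_antidiagonalTuple]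
      have hcc : Nat.Coprime (N - q.1 - q.2) p := by
        have he : N - q.1 - q.2 = N - (q.1 + q.2) := by omega
        rw [he, hsub (q.1 + q.2) (by omega)]
        exact h6
      constructor
      · rw [Fin.sum_univ_three]
        simp only [Matrix.cons_val_zero, Matrix.cons_val_one, Matrix.head_cons,
          Matrix.cons_val_two, Matrix.tail_cons]
        omega
      · intro i
        fin_cases i <;> simp [h1, h2, h4, h5, hcc] <;> omega
    · intro v hv
      simp only [Finset.mem_filter, Finset.Nat.mem_antidiagonalTuple,
        Fin.sum_univ_three] at hv
      obtain ⟨hsum, hall⟩ := hv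
      dsimp only
      funext i
      fin_cases i <;> simp <;> omega
    · intro q hq
      simp
    · intro v hv
      simp only [Finset.mem_filter, Finset.Nat.mem_antidiagonalTuple,
        Fin.sum_univ_three] at hv
      obtain ⟨hsum, hall⟩ := hv
      dsimp only
      have he : N - v 0 - v 1 = v 2 := by omega
      rw [he]
  -- per-term decomposition on P
  have hdecomp : ∀ q ∈ P, 1 / ((q.1 : ℚ) * (q.2 : ℚ) * ((N - q.1 - q.2 : ℕ) : ℚ)) =
      (1 / (N : ℚ)) * (1 / ((q.1 : ℚ) * q.2) + 1 / ((q.2 : ℚ) * ((N - q.1 - q.2 : ℕ) : ℚ))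
        + 1 / ((q.1 : ℚ) * ((N - q.1 - q.2 : ℕ) : ℚ))) := by
    intro q hq
    rw [show q = (q.1, q.2) from rfl, memP] at hq
    obtain ⟨h1, h2, h3, h4, h5, h6⟩ := hq
    have hca : ((q.1 : ℚ)) ≠ 0 := Nat.cast_ne_zero.mpr h1.ne'
    have hcb : ((q.2 : ℚ)) ≠ 0 := Nat.cast_ne_zero.mpr h2.ne'
    have hcc : (((N - q.1 - q.2 : ℕ) : ℚ)) ≠ 0 := Nat.cast_ne_zero.mpr (by omega)
    have hcn : ((N : ℚ)) ≠ 0 := Nat.cast_ne_zero.mpr hNpos.ne'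
    have hrel : (q.1 : ℚ) + (q.2 : ℚ) + ((N - q.1 - q.2 : ℕ) : ℚ) = (N : ℚ) := by
      have h : q.1 + q.2 + (N - q.1 - q.2) = N := by omega
      exact_mod_cast congrArg (Nat.cast : ℕ → ℚ) h
    exact aux3 _ _ _ _ hca hcb hcc hcn hrel
  -- symmetry sums on P
  have hsym2 : (∑ q ∈ P, 1 / ((q.2 : ℚ) * ((N - q.1 - q.2 : ℕ) : ℚ))) =
      ∑ q ∈ P, 1 / ((q.1 : ℚ) * (q.2 : ℚ)) := by
    refine Finset.sum_nbij' (fun q => (q.2, N - q.1 - q.2))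
      (fun q => (N - q.1 - q.2, q.1)) ?_ ?_ ?_ ?_ ?_
    · intro q hq
      rw [show q = (q.1, q.2) from rfl, memP] at hq
      obtain ⟨h1, h2, h3, h4, h5, h6⟩ := hq
      rw [memP]
      refine ⟨h2, by omega, by omega, h5, ?_, ?_⟩
      · have he : N - q.1 - q.2 = N - (q.1 + q.2) := by omega
        rw [he, hsub (q.1 + q.2) (by omega)]; exact h6
      · have he : q.2 + (N - q.1 - q.2) = N - q.1 := by omega
        rw [he, hsub q.1 (by omega)]; exact h4
    · intro q hq
      rw [show q = (q.1, q.2) from rfl, memP] at hq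
      obtain ⟨h1, h2, h3, h4, h5, h6⟩ := hq
      rw [memP]
      refine ⟨by omega, h1, by omega, ?_, h4, ?_⟩
      · have he : N - q.1 - q.2 = N - (q.1 + q.2) := by omega
        rw [he, hsub (q.1 + q.2) (by omega)]; exact h6
      · have he : N - q.1 - q.2 + q.1 = N - q.2 := by omega
        rw [he, hsub q.2 (by omega)]; exact h5
    · intro q hq
      rw [show q = (q.1, q.2) from rfl, memP] at hq
      obtain ⟨h1, h2, h3, h4, h5, h6⟩ := hq
      rw [Prod.ext_iff]
      refine ⟨?_, ?_⟩ <;> dsimp only <;> omega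
    · intro q hq
      rw [show q = (q.1, q.2) from rfl, memP] at hq
      obtain ⟨h1, h2, h3, h4, h5, h6⟩ := hq
      rw [Prod.ext_iff]
      refine ⟨?_, ?_⟩ <;> dsimp only <;> omega
    · intro q hq
      rfl
  have hsym3 : (∑ q ∈ P, 1 / ((q.1 : ℚ) * ((N - q.1 - q.2 : ℕ) : ℚ))) =
      ∑ q ∈ P, 1 / ((q.1 : ℚ) * (q.2 : ℚ)) := by
    refine Finset.sum_nbij' (fun q => (q.1, N - q.1 - q.2))
      (fun q => (q.1, N - q.1 - q.2)) ?_ ?_ ?_ ?_ ?_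
    · intro q hq
      rw [show q = (q.1, q.2) from rfl, memP] at hq
      obtain ⟨h1, h2, h3, h4, h5, h6⟩ := hq
      rw [memP]
      refine ⟨h1, by omega, by omega, h4, ?_, ?_⟩
      · have he : N - q.1 - q.2 = N - (q.1 + q.2) := by omega
        rw [he, hsub (q.1 + q.2) (by omega)]; exact h6
      · have he : q.1 + (N - q.1 - q.2) = N - q.2 := by omega
        rw [he, hsub q.2 (by omega)]; exact h5
    · intro q hq
      rw [show q = (q.1, q.2) from rfl, memP] at hq
      obtain ⟨h1, h2, h3, h4, h5, h6⟩ := hq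
      rw [memP]
      refine ⟨h1, by omega, by omega, h4, ?_, ?_⟩
      · have he : N - q.1 - q.2 = N - (q.1 + q.2) := by omega
        rw [he, hsub (q.1 + q.2) (by omega)]; exact h6
      · have he : q.1 + (N - q.1 - q.2) = N - q.2 := by omega
        rw [he, hsub q.2 (by omega)]; exact h5
    · intro q hq
      rw [show q = (q.1, q.2) from rfl, memP] at hq
      obtain ⟨h1, h2, h3, h4, h5, h6⟩ := hq
      rw [Prod.ext_iff]
      refine ⟨?_, ?_⟩ <;> dsimp only <;> omega
    · intro q hq
      rw [show q = (q.1, q.2) from rfl, memP] at hq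
      obtain ⟨h1, h2, h3, h4, h5, h6⟩ := hq
      rw [Prod.ext_iff]
      refine ⟨?_, ?_⟩ <;> dsimp only <;> omega
    · intro q hq
      rfl
  -- Step C : P → Q
  have stepC : (∑ q ∈ P, 1 / ((q.1 : ℚ) * (q.2 : ℚ))) =
      ∑ q ∈ Q, 1 / ((q.1 : ℚ) * ((q.2 - q.1 : ℕ) : ℚ)) := by
    refine Finset.sum_nbij' (fun q => (q.1, q.1 + q.2))
      (fun q => (q.1, q.2 - q.1)) ?_ ?_ ?_ ?_ ?_
    · intro q hq
      rw [show q = (q.1, q.2) from rfl, memP] at hq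
      obtain ⟨h1, h2, h3, h4, h5, h6⟩ := hq
      rw [memQ]
      refine ⟨h1, by omega, by omega, h4, h6, ?_⟩
      have he : q.1 + q.2 - q.1 = q.2 := by omega
      rw [he]; exact h5
    · intro q hq
      rw [show q = (q.1, q.2) from rfl, memQ] at hq
      obtain ⟨h1, h2, h3, h4, h5, h6⟩ := hq
      have hlt : q.2 < N := hltN q.2 h3 h5
      rw [memP]
      refine ⟨h1, by omega, by omega, h4, h6, ?_⟩
      have he : q.1 + (q.2 - q.1) = q.2 := by omega
      rw [he]; exact h5
    · intro q hq
      rw [Prod.ext_iff]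
      refine ⟨?_, ?_⟩ <;> dsimp only <;> omega
    · intro q hq
      rw [show q = (q.1, q.2) from rfl, memQ] at hq
      obtain ⟨h1, h2, h3, h4, h5, h6⟩ := hq
      rw [Prod.ext_iff]
      refine ⟨?_, ?_⟩ <;> dsimp only <;> omega
    · intro q hq
      dsimp only
      have he : q.1 + q.2 - q.1 = q.2 := by omega
      rw [he]
  -- Step D : on Q, split each term
  have hdecompQ : ∀ q ∈ Q, 1 / ((q.1 : ℚ) * ((q.2 - q.1 : ℕ) : ℚ)) =
      1 / ((q.1 : ℚ) * (q.2 : ℚ)) + 1 / (((q.2 - q.1 : ℕ) : ℚ) * (q.2 : ℚ)) := by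
    intro q hq
    rw [show q = (q.1, q.2) from rfl, memQ] at hq
    obtain ⟨h1, h2, h3, h4, h5, h6⟩ := hq
    have hca : ((q.1 : ℚ)) ≠ 0 := Nat.cast_ne_zero.mpr h1.ne'
    have hcb : (((q.2 - q.1 : ℕ) : ℚ)) ≠ 0 := Nat.cast_ne_zero.mpr (by omega)
    have hcn : ((q.2 : ℚ)) ≠ 0 := Nat.cast_ne_zero.mpr (by omega)
    have hrel : (q.1 : ℚ) + ((q.2 - q.1 : ℕ) : ℚ) = (q.2 : ℚ) := by
      have h : q.1 + (q.2 - q.1) = q.2 := by omega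
      exact_mod_cast congrArg (Nat.cast : ℕ → ℚ) h
    exact aux2 _ _ _ hca hcb hcn hrel
  have hsymQ : (∑ q ∈ Q, 1 / (((q.2 - q.1 : ℕ) : ℚ) * (q.2 : ℚ))) =
      ∑ q ∈ Q, 1 / ((q.1 : ℚ) * (q.2 : ℚ)) := by
    refine Finset.sum_nbij' (fun q => (q.2 - q.1, q.2))
      (fun q => (q.2 - q.1, q.2)) ?_ ?_ ?_ ?_ ?_
    · intro q hq
      rw [show q = (q.1, q.2) from rfl, memQ] at hq
      obtain ⟨h1, h2, h3, h4, h5, h6⟩ := hq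
      rw [memQ]
      refine ⟨by omega, by omega, h3, h6, h5, ?_⟩
      have he : q.2 - (q.2 - q.1) = q.1 := by omega
      rw [he]; exact h4
    · intro q hq
      rw [show q = (q.1, q.2) from rfl, memQ] at hq
      obtain ⟨h1, h2, h3, h4, h5, h6⟩ := hq
      rw [memQ]
      refine ⟨by omega, by omega, h3, h6, h5, ?_⟩
      have he : q.2 - (q.2 - q.1) = q.1 := by omega
      rw [he]; exact h4
    · intro q hq
      rw [show q = (q.1, q.2) from rfl, memQ] at hq
      obtain ⟨h1, h2, h3, h4, h5, h6⟩ := hq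
      rw [Prod.ext_iff]
      refine ⟨?_, ?_⟩ <;> dsimp only <;> omega
    · intro q hq
      rw [show q = (q.1, q.2) from rfl, memQ] at hq
      obtain ⟨h1, h2, h3, h4, h5, h6⟩ := hq
      rw [Prod.ext_iff]
      refine ⟨?_, ?_⟩ <;> dsimp only <;> omega
    · intro q hq
      rfl
  -- assemble
  have hNcast : ((N : ℕ) : ℚ) = (m : ℚ) * (p : ℚ) ^ r := by
    rw [hNdef]; push_cast; ring
  rw [stepA, Finset.sum_congr rfl hdecomp, ← Finset.mul_sum,
    Finset.sum_add_distrib, Finset.sum_add_distrib,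
    hsym2, hsym3, stepC, Finset.sum_congr rfl hdecompQ, Finset.sum_add_distrib, hsymQ,
    ← hNcast]
  ring
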